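/- arXiv:0903.4830 — 4 statements merged into one kernel-verified Lean document; each statement's English description precedes it below -/
import Mathlib

section
/- For any convex body K in E^d, the inequalities X(K) ≤ I(K) ≤ 2·X(K) hold, where X(K) is the X-ray number and I(K) is the illumination number. -/
open scoped RealInnerProductSpace

def IsXRayed {d : ℕ} (K : Set (EuclideanSpace ℝ (Fin d)))
    (v p : EuclideanSpace ℝ (Fin d)) : Prop :=
  ∃ t : ℝ, p + t • v ∈ interior K

noncomputable def xrayNumber {d : ℕ} (K : Set (EuclideanSpace ℝ (Fin d))) : ℕ :=
  sInf {n | ∃ D : Finset (EuclideanSpace ℝ (Fin d)), D.card = n ∧ (∀ v ∈ D, v ≠ 0) ∧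
    ∀ p ∈ K, ∃ v ∈ D, IsXRayed K v p}

/-- A boundary point `b` is illuminated by the direction `v` if the open ray from `b`
in direction `v` meets the interior of `K`. -/
def Illuminates {d : ℕ} (K : Set (EuclideanSpace ℝ (Fin d)))
    (v b : EuclideanSpace ℝ (Fin d)) : Prop :=
  ∃ t : ℝ, 0 < t ∧ b + t • v ∈ interior K

/-- The illumination number of `K`. -/
noncomputable def illumNumber {d : ℕ} (K : Set (EuclideanSpace ℝ (Fin d))) : ℕ :=
  sInf {n | ∃ D : Finset (EuclideanSpace ℝ (Fin d)), D.card = n ∧ (∀ v ∈ D, v ≠ 0) ∧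
    ∀ b ∈ frontier K, ∃ v ∈ D, Illuminates K v b}

theorem xray_le_illum_le_two_xray {d : ℕ} (K : Set (EuclideanSpace ℝ (Fin d)))
    (hKc : IsCompact K) (hKconv : Convex ℝ K) (hKint : (interior K).Nonempty) :
    xrayNumber K ≤ illumNumber K ∧ illumNumber K ≤ 2 * xrayNumber K := by
  classical
  obtain ⟨o, ho⟩ := hKint
  rcases Nat.eq_zero_or_pos d with hd | hd
  · subst hd
    haveI : Subsingleton (EuclideanSpace ℝ (Fin 0)) :=
      ⟨fun a b => PiLp.ext fun i => i.elim0⟩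
    have hKuniv : K = Set.univ :=
      Set.eq_univ_of_forall fun x => by
        have h := interior_subset ho
        rwa [Subsingleton.elim x o]
    have hfr : frontier K = (∅ : Set (EuclideanSpace ℝ (Fin 0))) := by
      rw [hKuniv, frontier_univ]
    have hi : illumNumber K = 0 := by
      have h0 : (0 : ℕ) ∈ {n | ∃ D : Finset (EuclideanSpace ℝ (Fin 0)), D.card = n ∧
          (∀ v ∈ D, v ≠ 0) ∧ ∀ b ∈ frontier K, ∃ v ∈ D, Illuminates K v b} :=
        ⟨∅, by simp, by simp, by simp [hfr]⟩
      exact Nat.eq_zero_of_le_zero (Nat.sInf_le h0)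
    have hx : xrayNumber K = 0 := by
      have hempty : {n | ∃ D : Finset (EuclideanSpace ℝ (Fin 0)), D.card = n ∧
          (∀ v ∈ D, v ≠ 0) ∧ ∀ p ∈ K, ∃ v ∈ D, IsXRayed K v p} = ∅ := by
        ext n
        simp only [Set.mem_setOf_eq, Set.mem_empty_iff_false, iff_false]
        rintro ⟨D, -, hnz, hcov⟩
        obtain ⟨v, hv, -⟩ := hcov o (interior_subset ho)
        exact hnz v hv (Subsingleton.elim v 0)
      rw [xrayNumber, hempty, Nat.sInf_empty]
    simp [hx, hi]
  · -- d ≥ 1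
    haveI : Nontrivial (EuclideanSpace ℝ (Fin d)) := by
      refine ⟨⟨EuclideanSpace.single ⟨0, hd⟩ 1, 0, ?_⟩⟩
      intro h
      have := congrArg (fun x : EuclideanSpace ℝ (Fin d) => x ⟨0, hd⟩) h
      simp [EuclideanSpace.single] at this
    have hKclosed : IsClosed K := hKc.isClosed
    have hfrK : frontier K ⊆ K := hKclosed.frontier_subset
    have hfrc : IsCompact (frontier K) := hKc.of_isClosed_subset isClosed_frontier hfrK
    have hKne : K.Nonempty := ⟨o, interior_subset ho⟩
    have hKnuniv : K ≠ Set.univ := fun h => (noncompact_univ (EuclideanSpace ℝ (Fin d))) (h ▸ hKc)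
    have hfrne : (frontier K).Nonempty := nonempty_frontier_iff.mpr ⟨hKne, hKnuniv⟩
    have hnotint : ∀ b ∈ frontier K, b ∉ interior K := fun b hb =>
      (hKclosed.frontier_eq ▸ hb).2
    -- open cover of the frontier by illumination sets
    have hUopen : ∀ i : frontier K,
        IsOpen ((fun x => x + (1/2 : ℝ) • (o - i.1)) ⁻¹' interior K) :=
      fun i => isOpen_interior.preimage (continuous_id.add continuous_const)
    have hcover : frontier K ⊆
        ⋃ i : frontier K, (fun x => x + (1/2 : ℝ) • (o - i.1)) ⁻¹' interior K := by
      intro b hb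
      refine Set.mem_iUnion.mpr ⟨⟨b, hb⟩, ?_⟩
      show b + (1/2 : ℝ) • (o - b) ∈ interior K
      have hcomb := hKconv.combo_interior_closure_mem_interior ho
        (subset_closure (hfrK hb)) (by norm_num : (0:ℝ) < 1/2) (by norm_num : (0:ℝ) ≤ 1/2)
        (by norm_num)
      convert hcomb using 1
      module
    obtain ⟨t, ht⟩ := hfrc.elim_finite_subcover _ hUopen hcover
    have hD0nz : ∀ v ∈ t.image (fun i : frontier K => o - i.1), v ≠ 0 := by
      intro v hv
      obtain ⟨i, -, rfl⟩ := Finset.mem_image.mp hv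
      intro h
      have hob : o = i.1 := by rwa [sub_eq_zero] at h
      exact hnotint i.1 i.2 (hob ▸ ho)
    have hD0ill : ∀ b ∈ frontier K,
        ∃ v ∈ t.image (fun i : frontier K => o - i.1), Illuminates K v b := by
      intro b hb
      obtain ⟨i, hit, hbU⟩ := Set.mem_iUnion₂.mp (ht hb)
      exact ⟨o - i.1, Finset.mem_image_of_mem _ hit, 1/2, by norm_num, hbU⟩
    have hISne : Set.Nonempty {n | ∃ D : Finset (EuclideanSpace ℝ (Fin d)), D.card = n ∧
        (∀ v ∈ D, v ≠ 0) ∧ ∀ b ∈ frontier K, ∃ v ∈ D, Illuminates K v b} :=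
      ⟨_, _, rfl, hD0nz, hD0ill⟩
    have hImem : illumNumber K ∈ {n | ∃ D : Finset (EuclideanSpace ℝ (Fin d)), D.card = n ∧
        (∀ v ∈ D, v ≠ 0) ∧ ∀ b ∈ frontier K, ∃ v ∈ D, Illuminates K v b} :=
      Nat.sInf_mem hISne
    obtain ⟨D, hDcard, hDnz, hDill⟩ := hImem
    obtain ⟨b0, hb0⟩ := hfrne
    obtain ⟨v0, hv0D, -⟩ := hDill b0 hb0
    have hDx : ∀ p ∈ K, ∃ v ∈ D, IsXRayed K v p := by
      intro p hp
      by_cases hpi : p ∈ interior K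
      · exact ⟨v0, hv0D, 0, by simpa using hpi⟩
      · have hpf : p ∈ frontier K := hKclosed.frontier_eq ▸ ⟨hp, hpi⟩
        obtain ⟨v, hvD, s, -, hs⟩ := hDill p hpf
        exact ⟨v, hvD, s, hs⟩
    have hXmem : illumNumber K ∈ {n | ∃ D : Finset (EuclideanSpace ℝ (Fin d)), D.card = n ∧
        (∀ v ∈ D, v ≠ 0) ∧ ∀ p ∈ K, ∃ v ∈ D, IsXRayed K v p} :=
      ⟨D, hDcard, hDnz, hDx⟩
    have h1 : xrayNumber K ≤ illumNumber K := Nat.sInf_le hXmem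
    have hXmin : xrayNumber K ∈ {n | ∃ D : Finset (EuclideanSpace ℝ (Fin d)), D.card = n ∧
        (∀ v ∈ D, v ≠ 0) ∧ ∀ p ∈ K, ∃ v ∈ D, IsXRayed K v p} :=
      Nat.sInf_mem ⟨_, hXmem⟩
    obtain ⟨E, hEcard, hEnz, hEx⟩ := hXmin
    have hE2nz : ∀ v ∈ E ∪ E.image (fun v => -v), v ≠ 0 := by
      intro v hv
      rcases Finset.mem_union.mp hv with h | h
      · exact hEnz v h
      · obtain ⟨w, hw, rfl⟩ := Finset.mem_image.mp h
        simpa using hEnz w hw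
    have hE2ill : ∀ b ∈ frontier K, ∃ v ∈ E ∪ E.image (fun v => -v), Illuminates K v b := by
      intro b hb
      obtain ⟨v, hvE, s, hs⟩ := hEx b (hfrK hb)
      rcases lt_trichotomy s 0 with h | h | h
      · refine ⟨-v, Finset.mem_union_right _ (Finset.mem_image_of_mem _ hvE), -s,
          by linarith, ?_⟩
        simpa [smul_neg, neg_smul] using hs
      · exact absurd (by simpa [h] using hs) (hnotint b hb)
      · exact ⟨v, Finset.mem_union_left _ hvE, s, h, hs⟩
    have h2 : illumNumber K ≤ 2 * xrayNumber K := by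
      have hmem : (E ∪ E.image (fun v => -v)).card ∈
          {n | ∃ D : Finset (EuclideanSpace ℝ (Fin d)), D.card = n ∧
          (∀ v ∈ D, v ≠ 0) ∧ ∀ b ∈ frontier K, ∃ v ∈ D, Illuminates K v b} :=
        ⟨_, rfl, hE2nz, hE2ill⟩
      have hle : (E ∪ E.image (fun v => -v)).card ≤ 2 * xrayNumber K := by
        calc (E ∪ E.image (fun v => -v)).card
            ≤ E.card + (E.image (fun v => -v)).card := Finset.card_union_le _ _
          _ ≤ E.card + E.card := by
              have := Finset.card_image_le (s := E) (f := fun v : EuclideanSpace ℝ (Fin d) => -v)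
              omega
          _ = 2 * xrayNumber K := by rw [hEcard]; ring
      exact le_trans (Nat.sInf_le hmem) hle
    exact ⟨h1, h2⟩
end

section
/- If M ⊂ ℝ^d (d ≥ 2) is a smooth convex body, i.e., each boundary point of M belongs to exactly one supporting hyperplane, then X(M) = d. -/
open scoped RealInnerProductSpace

/-- `n` is an outer unit normal of a supporting hyperplane of `K` at `b`. -/
def IsOuterUnitNormalAt {d : ℕ} (K : Set (EuclideanSpace ℝ (Fin d)))
    (b n : EuclideanSpace ℝ (Fin d)) : Prop :=
  ‖n‖ = 1 ∧ ∀ x ∈ K, ⟪n, x⟫ ≤ ⟪n, b⟫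

lemma exists_normal_of_not_xrayed {d : ℕ} {M : Set (EuclideanSpace ℝ (Fin d))}
    (hMcl : IsClosed M) (hMconv : Convex ℝ M) (hMint : (interior M).Nonempty)
    {p v : EuclideanSpace ℝ (Fin d)} (hp : p ∈ M) (hnx : ¬ IsXRayed M v p) :
    ∃ m, IsOuterUnitNormalAt M p m ∧ ⟪m, v⟫ = 0 := by
  set L : Set (EuclideanSpace ℝ (Fin d)) := Set.range (fun t : ℝ => p + t • v) with hL
  have hLconv : Convex ℝ L := by
    rintro x ⟨t₁, rfl⟩ y ⟨t₂, rfl⟩ a b ha hb hab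
    obtain rfl : b = 1 - a := by linarith
    exact ⟨a * t₁ + (1 - a) * t₂, by module⟩
  have hdisj : Disjoint (interior M) L := by
    rw [Set.disjoint_right]
    rintro x ⟨t, rfl⟩ hx
    exact hnx ⟨t, hx⟩
  obtain ⟨f, u, hfu, huf⟩ :=
    geometric_hahn_banach_open hMconv.interior isOpen_interior hLconv hdisj
  have hfv : f v = 0 := by
    by_contra h
    have h1 := huf (p + ((u - f p - 1) / f v) • v) ⟨_, rfl⟩
    rw [map_add, map_smul, smul_eq_mul, div_mul_cancel₀ _ h] at h1
    linarith
  have hsub : M ⊆ closure (interior M) := by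
    intro x hx
    obtain ⟨a, ha⟩ := hMint
    have h0 : Filter.Tendsto (fun n : ℕ => 1 / ((n : ℝ) + 1)) Filter.atTop (nhds 0) :=
      tendsto_one_div_add_atTop_nhds_zero_nat
    have htend : Filter.Tendsto
        (fun n : ℕ => (1 / ((n : ℝ) + 1)) • a + (1 - 1 / ((n : ℝ) + 1)) • x)
        Filter.atTop (nhds x) := by
      have hc : Filter.Tendsto (fun _ : ℕ => (1 : ℝ)) Filter.atTop (nhds 1) :=
        tendsto_const_nhds
      have h2 := (h0.smul_const a).add ((hc.sub h0).smul_const x)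
      simpa using h2
    refine mem_closure_of_tendsto htend (Filter.Eventually.of_forall fun n => ?_)
    have hn1 : (0:ℝ) < (n : ℝ) + 1 := by positivity
    have hle1 : 1 / ((n : ℝ) + 1) ≤ 1 := by
      rw [div_le_one hn1]; linarith [Nat.cast_nonneg (α := ℝ) n]
    exact hMconv.combo_interior_self_mem_interior ha hx (by positivity)
      (by linarith) (by ring)
  have hle : ∀ x ∈ M, f x ≤ u := by
    intro x hx
    have hx' : x ∈ closure (interior M) := hsub hx
    have hcl : closure (interior M) ⊆ {y | f y ≤ u} :=
      closure_minimal (fun y hy => (hfu y hy).le)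
        (isClosed_le f.continuous continuous_const)
    exact hcl hx'
  have hfp : f p = u := le_antisymm (hle p hp) (by simpa using huf p ⟨0, by simp⟩)
  set w := (InnerProductSpace.toDual ℝ (EuclideanSpace ℝ (Fin d))).symm f with hw
  have hwx : ∀ x, ⟪w, x⟫ = f x := fun x => InnerProductSpace.toDual_symm_apply
  obtain ⟨a, ha⟩ := hMint
  have hfa : f a < u := hfu a ha
  have hwne : w ≠ 0 := by
    intro h0
    have h1 : f a = 0 := by rw [← hwx a, h0, inner_zero_left]
    have h2 : f p = 0 := by rw [← hwx p, h0, inner_zero_left]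
    rw [hfp] at h2
    linarith
  have hnorm : ‖w‖ ≠ 0 := norm_ne_zero_iff.mpr hwne
  refine ⟨‖w‖⁻¹ • w, ⟨?_, ?_⟩, ?_⟩
  · rw [norm_smul, norm_inv, norm_norm, inv_mul_cancel₀ hnorm]
  · intro x hx
    rw [real_inner_smul_left, real_inner_smul_left, hwx, hwx, hfp]
    exact mul_le_mul_of_nonneg_left (hle x hx) (inv_nonneg.2 (norm_nonneg w))
  · rw [real_inner_smul_left, hwx, hfv, mul_zero]

lemma inner_lt_of_interior {d : ℕ} {M : Set (EuclideanSpace ℝ (Fin d))}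
    {u p x : EuclideanSpace ℝ (Fin d)} (hu : u ≠ 0)
    (hmax : ∀ y ∈ M, ⟪u, y⟫ ≤ ⟪u, p⟫) (hx : x ∈ interior M) : ⟪u, x⟫ < ⟪u, p⟫ := by
  obtain ⟨ε, hε, hball⟩ := Metric.isOpen_iff.1 isOpen_interior x hx
  have hun : 0 < ‖u‖ := norm_pos_iff.2 hu
  set y := x + (ε / (2 * ‖u‖)) • u with hy
  have hdist : dist y x < ε := by
    have h1 : y - x = (ε / (2 * ‖u‖)) • u := by simp [hy]
    rw [dist_eq_norm, h1, norm_smul, Real.norm_eq_abs, abs_of_pos (by positivity)]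
    have h2 : ε / (2 * ‖u‖) * ‖u‖ = ε / 2 := by field_simp
    rw [h2]; linarith
  have hyM : y ∈ M := interior_subset (hball hdist)
  have hle := hmax y hyM
  rw [inner_add_right, real_inner_smul_right, real_inner_self_eq_norm_mul_norm] at hle
  have hpos : 0 < ε / (2 * ‖u‖) * (‖u‖ * ‖u‖) := by positivity
  linarith

theorem xray_number_of_smooth {d : ℕ} (hd : 2 ≤ d)
    (M : Set (EuclideanSpace ℝ (Fin d)))
    (hMc : IsCompact M) (hMconv : Convex ℝ M) (hMint : (interior M).Nonempty)
    (hsmooth : ∀ b ∈ frontier M, ∃! n, IsOuterUnitNormalAt M b n) :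
    xrayNumber M = d := by
  classical
  have hMcl : IsClosed M := hMc.isClosed
  have hdpos : 0 < d := by omega
  -- the standard basis works
  set D : Finset (EuclideanSpace ℝ (Fin d)) :=
    Finset.univ.image (fun i : Fin d => EuclideanSpace.single i (1 : ℝ)) with hD
  have hinj : Function.Injective (fun i : Fin d => EuclideanSpace.single i (1 : ℝ)) := by
    intro i j h
    by_contra hne
    have h' : EuclideanSpace.single i (1 : ℝ) = EuclideanSpace.single j 1 := h
    have h2 : (EuclideanSpace.single i (1 : ℝ)) i = (EuclideanSpace.single j (1 : ℝ)) i := by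
      rw [h']
    simp [EuclideanSpace.single_apply, hne] at h2
  have hcard : D.card = d := by
    rw [hD, Finset.card_image_of_injective _ hinj, Finset.card_univ, Fintype.card_fin]
  have hnz : ∀ v ∈ D, v ≠ 0 := by
    intro v hv
    rw [hD, Finset.mem_image] at hv
    obtain ⟨i, -, rfl⟩ := hv
    intro h0
    have : (EuclideanSpace.single i (1 : ℝ)) i = 0 := by rw [h0]; rfl
    simp [EuclideanSpace.single_apply] at this
  have hcov : ∀ p ∈ M, ∃ v ∈ D, IsXRayed M v p := by
    intro p hp
    by_cases hpi : p ∈ interior M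
    · refine ⟨EuclideanSpace.single ⟨0, hdpos⟩ 1,
        by rw [hD]; exact Finset.mem_image_of_mem _ (Finset.mem_univ _), 0, by simpa using hpi⟩
    · have hpf : p ∈ frontier M := by
        rw [frontier, hMcl.closure_eq]; exact ⟨hp, hpi⟩
      obtain ⟨n, hn, huniq⟩ := hsmooth p hpf
      have hn0 : n ≠ 0 := by
        intro h0
        have := hn.1
        rw [h0, norm_zero] at this
        norm_num at this
      obtain ⟨i, hi⟩ : ∃ i, n i ≠ 0 := by
        by_contra h
        push_neg at h
        exact hn0 (by ext i; exact h i)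
      refine ⟨EuclideanSpace.single i 1,
        by rw [hD]; exact Finset.mem_image_of_mem _ (Finset.mem_univ _), ?_⟩
      by_contra hnx
      obtain ⟨m, hm, hmv⟩ := exists_normal_of_not_xrayed hMcl hMconv hMint hp hnx
      have hmn : m = n := huniq m hm
      rw [hmn] at hmv
      rw [EuclideanSpace.inner_single_right] at hmv
      simp at hmv
      exact hi hmv
  have hdS : d ∈ {n | ∃ D : Finset (EuclideanSpace ℝ (Fin d)), D.card = n ∧
      (∀ v ∈ D, v ≠ 0) ∧ ∀ p ∈ M, ∃ v ∈ D, IsXRayed M v p} :=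
    ⟨D, hcard, hnz, hcov⟩
  -- lower bound
  have hlb : ∀ k ∈ {n | ∃ D : Finset (EuclideanSpace ℝ (Fin d)), D.card = n ∧
      (∀ v ∈ D, v ≠ 0) ∧ ∀ p ∈ M, ∃ v ∈ D, IsXRayed M v p}, d ≤ k := by
    rintro k ⟨D', hcard', hnz', hcov'⟩
    by_contra hlt
    push_neg at hlt
    have hspan : Submodule.span ℝ (↑D' : Set (EuclideanSpace ℝ (Fin d))) ≠ ⊤ := by
      intro htop
      have h1 : Module.finrank ℝ (Submodule.span ℝ (↑D' : Set (EuclideanSpace ℝ (Fin d))))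
          ≤ D'.card := finrank_span_finset_le_card D'
      rw [htop] at h1
      rw [finrank_top, finrank_euclideanSpace_fin] at h1
      omega
    have horth : (Submodule.span ℝ (↑D' : Set (EuclideanSpace ℝ (Fin d))))ᗮ ≠ ⊥ := by
      intro hbot
      exact hspan (Submodule.orthogonal_eq_bot_iff.mp hbot)
    obtain ⟨u, humem, hu0⟩ := Submodule.exists_mem_ne_zero_of_ne_bot horth
    have huv : ∀ v ∈ D', ⟪u, v⟫ = 0 := by
      intro v hv
      have := (Submodule.mem_orthogonal _ u).1 humem v (Submodule.subset_span hv)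
      rw [real_inner_comm] at this
      exact this
    have hMne : M.Nonempty := hMint.mono interior_subset
    obtain ⟨p, hpM, hpmax⟩ := hMc.exists_isMaxOn hMne
      ((continuous_const.inner continuous_id).continuousOn :
        ContinuousOn (fun x => ⟪u, x⟫) M)
    obtain ⟨v, hvD, t, hx⟩ := hcov' p hpM
    have h1 : ⟪u, p + t • v⟫ < ⟪u, p⟫ :=
      inner_lt_of_interior hu0 (fun y hy => hpmax hy) hx
    have h2 : ⟪u, p + t • v⟫ = ⟪u, p⟫ := by
      rw [inner_add_right, real_inner_smul_right, huv v hvD, mul_zero, add_zero]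
    linarith
  unfold xrayNumber
  exact le_antisymm (Nat.sInf_le hdS) (hlb _ (Nat.sInf_mem ⟨d, hdS⟩))
end

section
/- Let x, y be determined by the equations cos x = cos(11.25°)·cos y and cos x = cos(33.548°)·sin y with 0 < y < π/2, 0 < x < π/2. Then x < arccos(√(2/5)). -/
open Real

theorem dim_five_numerical (x y rc : ℝ)
    (hx : 0 < x) (hx' : x < π / 2) (hy : 0 < y) (hy' : y < π / 2)
    (hrc0 : 0 ≤ rc) (hrc : rc ≤ 0.58555)
    (h1 : cos x = cos (π / 16) * cos y)
    (h2 : cos x = cos rc * sin y) :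
    x < Real.arccos (Real.sqrt (2 / 5)) := by
  have hcx : 0 < cos x := Real.cos_pos_of_mem_Ioo ⟨by linarith [Real.pi_pos], hx'⟩
  -- bound cos (π/16)
  have hsqrt2 : (1.4142 : ℝ) ≤ √2 := by
    rw [show (1.4142 : ℝ) = √(1.4142^2) by rw [Real.sqrt_sq]; norm_num]
    exact Real.sqrt_le_sqrt (by norm_num)
  have hsqrt2' : (1.8477 : ℝ) ≤ √(2 + √2) := by
    rw [show (1.8477 : ℝ) = √(1.8477^2) by rw [Real.sqrt_sq]; norm_num]
    exact Real.sqrt_le_sqrt (by nlinarith)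
  have hca_sq : cos (π / 16) ^ 2 = (2 + √(2 + √2)) / 4 := by
    rw [Real.cos_pi_div_sixteen, div_pow, Real.sq_sqrt (by positivity)]
    norm_num
  have hA : (0.961925 : ℝ) ≤ cos (π / 16) ^ 2 := by
    rw [hca_sq]; linarith
  -- bound cos rc
  have hcr : (0.8285654 : ℝ) ≤ cos rc := by
    have := Real.one_sub_sq_div_two_le_cos (x := rc)
    nlinarith
  have hB : (0.6865 : ℝ) ≤ cos rc ^ 2 := by nlinarith
  have hca1 : cos (π / 16) ^ 2 ≤ 1 := Real.cos_sq_le_one _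
  have hcr1 : cos rc ^ 2 ≤ 1 := Real.cos_sq_le_one _
  have hpy : sin y ^ 2 + cos y ^ 2 = 1 := Real.sin_sq_add_cos_sq y
  have e1 : cos x ^ 2 = cos (π / 16) ^ 2 * cos y ^ 2 := by rw [h1]; ring
  have e2 : cos x ^ 2 = cos rc ^ 2 * sin y ^ 2 := by rw [h2]; ring
  have key : cos x ^ 2 * (cos (π / 16) ^ 2 + cos rc ^ 2)
      = cos (π / 16) ^ 2 * cos rc ^ 2 := by
    linear_combination cos rc ^ 2 * e1 + cos (π / 16) ^ 2 * e2 +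
      cos (π / 16) ^ 2 * cos rc ^ 2 * hpy
  have hgt : (2 : ℝ) / 5 < cos x ^ 2 := by
    nlinarith [mul_nonneg (sub_nonneg.2 hA) (sub_nonneg.2 hB),
      sq_nonneg (cos x)]
  have hlt : Real.sqrt (2 / 5) < cos x := by
    rw [Real.sqrt_lt' hcx]; linarith
  calc x = Real.arccos (cos x) := (Real.arccos_cos hx.le (by linarith [Real.pi_pos])).symm
    _ < Real.arccos (Real.sqrt (2 / 5)) := by
        apply Real.strictAntiOn_arccos ⟨by linarith [Real.sqrt_nonneg ((2:ℝ)/5)], _⟩ ⟨by linarith [Real.cos_le_one x], Real.cos_le_one x⟩ hlt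
        rw [show (1:ℝ) = √1 by simp]
        exact Real.sqrt_le_sqrt (by norm_num)
end

section
/- If r_c ≤ 0.3961 rad (≈ 22.691°), then arccos(cos(r_c)·cos(π/4)) < arccos(√(5/12)). -/
open Real

theorem dim_six_numerical (rc : ℝ) (hrc0 : 0 ≤ rc) (hrc : rc ≤ 0.3961) :
    Real.arccos (cos rc * cos (π / 4)) < Real.arccos (Real.sqrt (5 / 12)) := by
  have h2 : cos (π/4) = Real.sqrt 2 / 2 := Real.cos_pi_div_four
  have hs2 : (1.414:ℝ) ≤ Real.sqrt 2 := by
    rw [show (1.414:ℝ) = Real.sqrt (1.414^2) by rw [Real.sqrt_sq]; norm_num]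
    exact Real.sqrt_le_sqrt (by norm_num)
  have hcos : 1 - rc^2/2 ≤ cos rc := Real.one_sub_sq_div_two_le_cos
  have hrclb : (0.921:ℝ) ≤ cos rc := by nlinarith [sq_nonneg rc]
  have hkey : Real.sqrt (5/12) < cos rc * cos (π/4) := by
    have hsq : Real.sqrt (5/12) < 0.651 := by
      rw [show (0.651:ℝ) = Real.sqrt (0.651^2) by rw [Real.sqrt_sq]; norm_num]
      exact Real.sqrt_lt_sqrt (by norm_num) (by norm_num)
    rw [h2]
    nlinarith
  have h1 : Real.sqrt (5/12) ∈ Set.Icc (-1:ℝ) 1 := by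
    constructor
    · exact le_trans (by norm_num) (Real.sqrt_nonneg _)
    · rw [show (1:ℝ) = Real.sqrt 1 by simp]
      exact Real.sqrt_le_sqrt (by norm_num)
  have h3 : cos rc * cos (π/4) ∈ Set.Icc (-1:ℝ) 1 := by
    constructor
    · nlinarith [Real.cos_le_one rc, Real.neg_one_le_cos rc, h2, hs2,
        Real.sq_sqrt (by norm_num : (2:ℝ) ≥ 0)]
    · nlinarith [Real.cos_le_one rc, h2, hs2, Real.sq_sqrt (by norm_num : (2:ℝ) ≥ 0),
        Real.sqrt_nonneg 2, Real.neg_one_le_cos rc]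
  exact Real.strictAntiOn_arccos h1 h3 hkey
end
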